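/- arXiv:1906.05988 — 2 statements merged into one kernel-verified Lean document; each statement's English description precedes it below -/
import Mathlib

section
/- Let V̄, V : Δ(S) → ℝ be bounded Borel functions, let b ∈ Δ(S), ε > 0, and t ∈ ℕ. Suppose for each a ∈ A, μ*_a ∈ D̃_a attains inf_{μ̃∈D̃_a} U_{V}(b,a,μ̃), and a* ∈ A attains max_{a∈A} U_{V̄}(b,a,μ*_a). Then (L V̄)(b) − (L V)(b) − ε β^{−t} ≤ β ∫ Σ_{z∈Z} n_z(b,p) [ V̄(f(b,p,z)) − V(f(b,p,z)) − ε β^{−(t+1)} ] dμ*_{a*}(p,u), where terms n_z(b,p)·V̄(f(b,p,z)) and n_z(b,p)·V(f(b,p,z)) are taken to be 0 whenever n_z(b,p) = 0. (This is the excess-uncertainty recursion justifying the forward exploration step of the heuristic search value iteration algorithm.) -/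
open MeasureTheory

section Defs

variable {S Z A : Type*}

/-- Observation weight `n_z(b,p) = Σ_s Σ_{s'} p_s(s',z) b_s`. -/
def obsW [Fintype S] (b : S → ℝ) (p : S → (S × Z) → ℝ) (z : Z) : ℝ :=
  ∑ s, ∑ s', p s (s', z) * b s

/-- Bayesian belief update `f(b,p,z)`. -/
noncomputable def bUpd [Fintype S] (b : S → ℝ) (p : S → (S × Z) → ℝ) (z : Z) : S → ℝ :=
  fun s' => (∑ s, p s (s', z) * b s) / obsW b p z

/-- The support set `X̃_{as}`. -/
def XasSet [Fintype S] [Fintype Z] (pbar : (S × Z) → ℝ) :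
    Set (((S × Z) → ℝ) × ((S × Z) → ℝ)) :=
  {x | (∀ i, x.1 i - pbar i ≤ x.2 i) ∧ (∀ i, pbar i - x.1 i ≤ x.2 i) ∧
       x.1 ∈ stdSimplex ℝ (S × Z)}

/-- The box uncertainty set `B_{as}`. -/
def BasSet [Fintype S] [Fintype Z] (pbar c : (S × Z) → ℝ) : Set ((S × Z) → ℝ) :=
  {p | p ∈ stdSimplex ℝ (S × Z) ∧ ∀ i, |p i - pbar i| ≤ c i}

/-- The ambiguity set `D̃_{as}`. -/
def DasSet [Fintype S] [Fintype Z] (pbar c : (S × Z) → ℝ) :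
    Set (Measure (((S × Z) → ℝ) × ((S × Z) → ℝ))) :=
  {μ | IsProbabilityMeasure μ ∧ μ (XasSet pbar) = 1 ∧
       Integrable (fun x => x.2) μ ∧ (∫ x, x.2 ∂μ) = c}

/-- The product ambiguity set `D̃_a = ⊗_s D̃_{as}`. -/
def DaSet [Fintype S] [Fintype Z] (pbar c : S → (S × Z) → ℝ) :
    Set (Measure (S → ((S × Z) → ℝ) × ((S × Z) → ℝ))) :=
  {μ | ∃ ν : S → Measure (((S × Z) → ℝ) × ((S × Z) → ℝ)),
    (∀ s, ν s ∈ DasSet (pbar s) (c s)) ∧ μ = Measure.pi ν}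

/-- The term `n_z(b,p) V(f(b,p,z))`, with the convention that it is `0` when `n_z(b,p) = 0`. -/
noncomputable def bTerm [Fintype S] (V : (S → ℝ) → ℝ) (b : S → ℝ)
    (p : S → (S × Z) → ℝ) (z : Z) : ℝ :=
  if obsW b p z = 0 then 0 else obsW b p z * V (bUpd b p z)

/-- `U_V(b,a,μ̃)`. -/
noncomputable def UVal [Fintype S] [Fintype Z] (r : A → S → ℝ) (β : ℝ)
    (V : (S → ℝ) → ℝ) (b : S → ℝ) (a : A)
    (μ : Measure (S → ((S × Z) → ℝ) × ((S × Z) → ℝ))) : ℝ :=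
  ∫ x, ((∑ s, b s * r a s) + β * ∑ z, bTerm V b (fun s => (x s).1) z) ∂μ

/-- The distributionally robust Bellman operator `L`. -/
noncomputable def Lop [Fintype S] [Fintype Z] [Fintype A]
    (pbar c : A → S → (S × Z) → ℝ) (r : A → S → ℝ) (β : ℝ)
    (V : (S → ℝ) → ℝ) (b : S → ℝ) : ℝ :=
  ⨆ a : A, sInf ((fun μ => UVal r β V b a μ) '' DaSet (pbar a) (c a))

end Defs

section Helpers

variable {S Z : Type*} [Fintype S] [Fintype Z]

lemma obsW_nonneg {b : S → ℝ} (hb : b ∈ stdSimplex ℝ S)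
    {p : S → (S × Z) → ℝ} (hp : ∀ s, p s ∈ stdSimplex ℝ (S × Z)) (z : Z) :
    0 ≤ obsW b p z :=
  Finset.sum_nonneg fun s _ => Finset.sum_nonneg fun s' _ =>
    mul_nonneg ((hp s).1 _) (hb.1 s)

lemma sum_obsW_eq_one {b : S → ℝ} (hb : b ∈ stdSimplex ℝ S)
    {p : S → (S × Z) → ℝ} (hp : ∀ s, p s ∈ stdSimplex ℝ (S × Z)) :
    ∑ z : Z, obsW b p z = 1 := by
  unfold obsW
  rw [Finset.sum_comm]
  have key : ∀ s : S, ∑ z : Z, ∑ s' : S, p s (s', z) * b s = b s := by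
    intro s
    have : ∑ z : Z, ∑ s' : S, p s (s', z) * b s
        = (∑ i : S × Z, p s i) * b s := by
      rw [Fintype.sum_prod_type, Finset.sum_mul, Finset.sum_comm]
      simp [Finset.sum_mul]
    rw [this, (hp s).2, one_mul]
  simp_rw [key]
  exact hb.2

lemma bUpd_mem_stdSimplex {b : S → ℝ} (hb : b ∈ stdSimplex ℝ S)
    {p : S → (S × Z) → ℝ} (hp : ∀ s, p s ∈ stdSimplex ℝ (S × Z)) {z : Z}
    (hn : obsW b p z ≠ 0) : bUpd b p z ∈ stdSimplex ℝ S := by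
  constructor
  · intro s'
    exact div_nonneg (Finset.sum_nonneg fun s _ => mul_nonneg ((hp s).1 _) (hb.1 s))
      (obsW_nonneg hb hp z)
  · unfold bUpd
    rw [← Finset.sum_div]
    have : ∑ s' : S, ∑ s : S, p s (s', z) * b s = obsW b p z := by
      rw [obsW, Finset.sum_comm]
    rw [this]
    exact div_self hn

lemma abs_bTerm_le {b : S → ℝ} (hb : b ∈ stdSimplex ℝ S)
    {p : S → (S × Z) → ℝ} (hp : ∀ s, p s ∈ stdSimplex ℝ (S × Z))
    {V : (S → ℝ) → ℝ} {M : ℝ} (hM0 : 0 ≤ M)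
    (hM : ∀ b' ∈ stdSimplex ℝ S, |V b'| ≤ M) (z : Z) :
    |bTerm V b p z| ≤ obsW b p z * M := by
  unfold bTerm
  split_ifs with h
  · simpa using mul_nonneg (obsW_nonneg hb hp z) hM0
  · rw [abs_mul, abs_of_nonneg (obsW_nonneg hb hp z)]
    exact mul_le_mul_of_nonneg_left (hM _ (bUpd_mem_stdSimplex hb hp h))
      (obsW_nonneg hb hp z)

lemma measurable_obsW (b : S → ℝ) (z : Z) :
    Measurable (fun x : S → ((S × Z) → ℝ) × ((S × Z) → ℝ) =>
      obsW b (fun s => (x s).1) z) := by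
  unfold obsW
  refine Finset.measurable_sum _ fun s _ => Finset.measurable_sum _ fun s' _ => ?_
  exact (((measurable_pi_apply s).fst).eval.mul_const _)

lemma measurable_bTerm {V : (S → ℝ) → ℝ} (hV : Measurable V) (b : S → ℝ) (z : Z) :
    Measurable (fun x : S → ((S × Z) → ℝ) × ((S × Z) → ℝ) =>
      bTerm V b (fun s => (x s).1) z) := by
  unfold bTerm
  have hupd : Measurable (fun x : S → ((S × Z) → ℝ) × ((S × Z) → ℝ) =>
      bUpd b (fun s => (x s).1) z) := by
    unfold bUpd
    refine measurable_pi_lambda _ fun s' => ?_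
    refine Measurable.div ?_ (measurable_obsW b z)
    refine Finset.measurable_sum _ fun s _ => ?_
    exact (((measurable_pi_apply s).fst).eval.mul_const _)
  exact Measurable.ite ((measurable_obsW b z) (measurableSet_singleton 0))
    measurable_const ((measurable_obsW b z).mul (hV.comp hupd))

lemma measurableSet_XasSet (pbar : (S × Z) → ℝ) :
    MeasurableSet (XasSet pbar : Set (((S × Z) → ℝ) × ((S × Z) → ℝ))) := by
  have h1 : MeasurableSet {x : ((S × Z) → ℝ) × ((S × Z) → ℝ) |
      ∀ i, x.1 i - pbar i ≤ x.2 i} := by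
    rw [Set.setOf_forall]
    refine MeasurableSet.iInter fun i => ?_
    exact measurableSet_le ((measurable_fst.eval.sub measurable_const))
      measurable_snd.eval
  have h2 : MeasurableSet {x : ((S × Z) → ℝ) × ((S × Z) → ℝ) |
      ∀ i, pbar i - x.1 i ≤ x.2 i} := by
    rw [Set.setOf_forall]
    refine MeasurableSet.iInter fun i => ?_
    exact measurableSet_le (measurable_const.sub measurable_fst.eval)
      measurable_snd.eval
  have h3 : MeasurableSet {x : ((S × Z) → ℝ) × ((S × Z) → ℝ) |
      x.1 ∈ stdSimplex ℝ (S × Z)} :=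
    measurable_fst (isClosed_stdSimplex ℝ (S × Z)).measurableSet
  exact h1.inter (h2.inter h3)

lemma DaSet_prob {pbar c : S → (S × Z) → ℝ}
    {μ : Measure (S → ((S × Z) → ℝ) × ((S × Z) → ℝ))} (hμ : μ ∈ DaSet pbar c) :
    IsProbabilityMeasure μ := by
  obtain ⟨ν, hν, rfl⟩ := hμ
  haveI : ∀ s, IsProbabilityMeasure (ν s) := fun s => (hν s).1
  infer_instance

lemma DaSet_ae {pbar c : S → (S × Z) → ℝ}
    {μ : Measure (S → ((S × Z) → ℝ) × ((S × Z) → ℝ))} (hμ : μ ∈ DaSet pbar c) :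
    ∀ᵐ x ∂μ, ∀ s, (x s).1 ∈ stdSimplex ℝ (S × Z) := by
  obtain ⟨ν, hν, rfl⟩ := hμ
  haveI : ∀ s, IsProbabilityMeasure (ν s) := fun s => (hν s).1
  have hT : Measure.pi ν (Set.pi Set.univ fun s => XasSet (pbar s)) = 1 := by
    rw [Measure.pi_pi]
    simp only [fun s => (hν s).2.1]
    simp
  have hmeas : MeasurableSet (Set.pi Set.univ fun s => XasSet (pbar s)) :=
    MeasurableSet.univ_pi fun s => measurableSet_XasSet (pbar s)
  have : ∀ᵐ x ∂(Measure.pi ν), x ∈ Set.pi Set.univ fun s => XasSet (pbar s) := by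
    rw [ae_iff]
    have := prob_compl_eq_zero_iff hmeas |>.2 hT
    simpa [Set.compl_def] using this
  filter_upwards [this] with x hx s
  exact (hx s (Set.mem_univ s)).2.2

end Helpers
section Main

variable {S Z : Type*} [Fintype S] [Fintype Z]

lemma UVal_master {A : Type*} (r : A → S → ℝ) (β : ℝ) (a : A)
    {pbar c : S → (S × Z) → ℝ} {μ : Measure (S → ((S × Z) → ℝ) × ((S × Z) → ℝ))}
    (hμ : μ ∈ DaSet pbar c)
    {V : (S → ℝ) → ℝ} (hVm : Measurable V) {M : ℝ} (hM0 : 0 ≤ M)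
    (hM : ∀ b' ∈ stdSimplex ℝ S, |V b'| ≤ M)
    {b : S → ℝ} (hb : b ∈ stdSimplex ℝ S) :
    Integrable (fun x => ∑ z, bTerm V b (fun s => (x s).1) z) μ ∧
    |∫ x, ∑ z, bTerm V b (fun s => (x s).1) z ∂μ| ≤ M ∧
    UVal r β V b a μ =
      (∑ s, b s * r a s) + β * ∫ x, ∑ z, bTerm V b (fun s => (x s).1) z ∂μ := by
  haveI := DaSet_prob hμ
  have hmeas : Measurable (fun x : S → ((S × Z) → ℝ) × ((S × Z) → ℝ) =>
      ∑ z, bTerm V b (fun s => (x s).1) z) :=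
    Finset.measurable_sum _ fun z _ => measurable_bTerm hVm b z
  have hae : ∀ᵐ x ∂μ, ‖∑ z, bTerm V b (fun s => (x s).1) z‖ ≤ M := by
    filter_upwards [DaSet_ae hμ] with x hx
    rw [Real.norm_eq_abs]
    calc |∑ z, bTerm V b (fun s => (x s).1) z|
        ≤ ∑ z, |bTerm V b (fun s => (x s).1) z| := Finset.abs_sum_le_sum_abs _ _
      _ ≤ ∑ z, obsW b (fun s => (x s).1) z * M :=
          Finset.sum_le_sum fun z _ => abs_bTerm_le hb hx hM0 hM z
      _ = (∑ z, obsW b (fun s => (x s).1) z) * M := by rw [Finset.sum_mul]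
      _ = M := by rw [sum_obsW_eq_one hb hx, one_mul]
  have hInt : Integrable (fun x => ∑ z, bTerm V b (fun s => (x s).1) z) μ :=
    (integrable_const M).mono' hmeas.aestronglyMeasurable hae
  refine ⟨hInt, ?_, ?_⟩
  · have := norm_integral_le_of_norm_le_const (μ := μ) hae
    simpa using this
  · rw [UVal, integral_add (integrable_const _) (hInt.const_mul β), integral_const,
      integral_const_mul]
    simp

end Main


/-- the excess-uncertainty recursion.  If `μ*_a` attains
`inf_{μ̃∈D̃_a} U_V(b,a,μ̃)` for each `a` and `a*` attains `max_a U_V̄(b,a,μ*_a)`, then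
`(LV̄)(b) − (LV)(b) − εβ^{−t} ≤ β ∫ Σ_z n_z(b,p) [V̄(f) − V(f) − εβ^{−(t+1)}] dμ*_{a*}`,
with the convention that the terms `n_z·V̄(f)`, `n_z·V(f)` vanish when `n_z(b,p) = 0`. -/
theorem excess_uncertainty_recursion {S Z A : Type*} [Fintype S] [Nonempty S]
    [Fintype Z] [Nonempty Z] [Fintype A] [Nonempty A]
    (pbar c : A → S → (S × Z) → ℝ)
    (hpbar : ∀ a s, pbar a s ∈ stdSimplex ℝ (S × Z))
    (hc : ∀ a s i, 0 ≤ c a s i)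
    (r : A → S → ℝ) (β : ℝ) (hβ0 : 0 < β) (hβ1 : β < 1)
    (Vbar V : (S → ℝ) → ℝ) (hVbarm : Measurable Vbar) (hVm : Measurable V)
    (hVbarb : ∃ M, ∀ b ∈ stdSimplex ℝ S, |Vbar b| ≤ M)
    (hVb : ∃ M, ∀ b ∈ stdSimplex ℝ S, |V b| ≤ M)
    (b : S → ℝ) (hb : b ∈ stdSimplex ℝ S) (ε : ℝ) (hε : 0 < ε) (t : ℕ)
    (μstar : A → Measure (S → ((S × Z) → ℝ) × ((S × Z) → ℝ)))
    (hμmem : ∀ a, μstar a ∈ DaSet (pbar a) (c a))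
    (hμmin : ∀ a, ∀ μ ∈ DaSet (pbar a) (c a), UVal r β V b a (μstar a) ≤ UVal r β V b a μ)
    (astar : A)
    (hamax : ∀ a, UVal r β Vbar b a (μstar a) ≤ UVal r β Vbar b astar (μstar astar)) :
    Lop pbar c r β Vbar b - Lop pbar c r β V b - ε / β ^ t ≤
      β * ∫ x, ∑ z, (bTerm Vbar b (fun s => (x s).1) z - bTerm V b (fun s => (x s).1) z
          - obsW b (fun s => (x s).1) z * (ε / β ^ (t + 1))) ∂(μstar astar) := by
  obtain ⟨M1, hM1⟩ := hVbarb
  obtain ⟨M2, hM2⟩ := hVb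
  set Mb : ℝ := max M1 0 with hMb
  set Mv : ℝ := max M2 0 with hMv
  have hMb0 : 0 ≤ Mb := le_max_right _ _
  have hMv0 : 0 ≤ Mv := le_max_right _ _
  have hMb' : ∀ b' ∈ stdSimplex ℝ S, |Vbar b'| ≤ Mb :=
    fun b' h => (hM1 b' h).trans (le_max_left _ _)
  have hMv' : ∀ b' ∈ stdSimplex ℝ S, |V b'| ≤ Mv :=
    fun b' h => (hM2 b' h).trans (le_max_left _ _)
  set μ := μstar astar with hμdef
  set k : ℝ := ε / β ^ (t + 1) with hk
  -- notation for the integrals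
  obtain ⟨hIbar, hBbar, hUbar⟩ :=
    UVal_master r β astar (hμmem astar) hVbarm hMb0 hMb' hb
  obtain ⟨hIv, hBv, hUv⟩ :=
    UVal_master r β astar (hμmem astar) hVm hMv0 hMv' hb
  haveI : IsProbabilityMeasure μ := DaSet_prob (hμmem astar)
  -- A1 : Lop Vbar b ≤ UVal Vbar astar μ
  have A1 : Lop pbar c r β Vbar b ≤ UVal r β Vbar b astar μ := by
    refine ciSup_le fun a => ?_
    have hbdd : BddBelow ((fun μ' => UVal r β Vbar b a μ') '' DaSet (pbar a) (c a)) := by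
      refine ⟨(∑ s, b s * r a s) - β * Mb, ?_⟩
      rintro y ⟨μ', hμ', rfl⟩
      obtain ⟨_, hB, hU⟩ := UVal_master r β a hμ' hVbarm hMb0 hMb' hb
      have := abs_le.1 hB
      show (∑ s, b s * r a s) - β * Mb ≤ UVal r β Vbar b a μ'
      rw [hU]
      nlinarith [this.1, hβ0.le]
    have h1 : sInf ((fun μ' => UVal r β Vbar b a μ') '' DaSet (pbar a) (c a))
        ≤ UVal r β Vbar b a (μstar a) :=
      csInf_le hbdd ⟨μstar a, hμmem a, rfl⟩
    exact h1.trans (hamax a)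
  -- A2 : UVal V astar μ ≤ Lop V b
  have A2 : UVal r β V b astar μ ≤ Lop pbar c r β V b := by
    have h1 : UVal r β V b astar μ
        ≤ sInf ((fun μ' => UVal r β V b astar μ') '' DaSet (pbar astar) (c astar)) := by
      refine le_csInf ⟨UVal r β V b astar (μstar astar), μstar astar, hμmem astar, rfl⟩ ?_
      rintro y ⟨μ', hμ', rfl⟩
      exact hμmin astar μ' hμ'
    refine h1.trans ?_
    rw [Lop]
    exact le_ciSup (f := fun a : A => sInf ((fun μ' => UVal r β V b a μ') '' DaSet (pbar a) (c a)))
      (Set.Finite.bddAbove (Set.finite_range _)) astar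
  -- the weight-sum function
  have haefull := DaSet_ae (hμmem astar)
  have hnmeas : Measurable (fun x : S → ((S × Z) → ℝ) × ((S × Z) → ℝ) =>
      ∑ z, obsW b (fun s => (x s).1) z) :=
    Finset.measurable_sum _ fun z _ => measurable_obsW b z
  have hnae : (fun x : S → ((S × Z) → ℝ) × ((S × Z) → ℝ) =>
      (∑ z, obsW b (fun s => (x s).1) z) * k) =ᵐ[μ] fun _ => k := by
    filter_upwards [haefull] with x hx
    rw [sum_obsW_eq_one hb hx, one_mul]
  have hnInt : Integrable (fun x : S → ((S × Z) → ℝ) × ((S × Z) → ℝ) =>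
      (∑ z, obsW b (fun s => (x s).1) z) * k) μ :=
    (integrable_const k).congr hnae.symm
  have hnint_eq : ∫ x, (∑ z, obsW b (fun s => (x s).1) z) * k ∂μ = k := by
    rw [integral_congr_ae hnae, integral_const]
    simp
  -- rewrite the RHS integrand
  have hrw : (fun x : S → ((S × Z) → ℝ) × ((S × Z) → ℝ) =>
      ∑ z, (bTerm Vbar b (fun s => (x s).1) z - bTerm V b (fun s => (x s).1) z
        - obsW b (fun s => (x s).1) z * k))
      = fun x => (∑ z, bTerm Vbar b (fun s => (x s).1) z)
          - (∑ z, bTerm V b (fun s => (x s).1) z)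
          - (∑ z, obsW b (fun s => (x s).1) z) * k := by
    funext x
    rw [Finset.sum_mul]
    rw [← Finset.sum_sub_distrib, ← Finset.sum_sub_distrib]
  have hRHS : ∫ x, ∑ z, (bTerm Vbar b (fun s => (x s).1) z
        - bTerm V b (fun s => (x s).1) z - obsW b (fun s => (x s).1) z * k) ∂μ
      = (∫ x, ∑ z, bTerm Vbar b (fun s => (x s).1) z ∂μ)
        - (∫ x, ∑ z, bTerm V b (fun s => (x s).1) z ∂μ) - k := by
    have hIsub : Integrable (fun x : S → ((S × Z) → ℝ) × ((S × Z) → ℝ) =>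
        (∑ z, bTerm Vbar b (fun s => (x s).1) z) - ∑ z, bTerm V b (fun s => (x s).1) z) μ :=
      hIbar.sub hIv
    rw [hrw, integral_sub hIsub hnInt, integral_sub hIbar hIv, hnint_eq]
  have hβt : β ^ t ≠ 0 := pow_ne_zero _ hβ0.ne'
  have hβk : β * k = ε / β ^ t := by
    rw [hk, pow_succ]
    field_simp
  rw [hRHS]
  have := hamax astar
  rw [hUbar, hUv] at *
  nlinarith [A1, A2, hβk]
end

section
/- Suppose v ∈ ℝ^S satisfies v_s ≥ r_{as} + β · max { Σ_{(s',z)∈S×Z} p(s',z) v_{s'} : p ∈ B_{as} } for every a ∈ A and s ∈ S (the optimistic fully-observable MDP inequalities), and let h : Δ(S) → ℝ be the linear function h(b) = Σ_{s∈S} b_s v_s. Then (Lh)(b) ≤ h(b) for every b ∈ Δ(S). In other words, the distributionally optimistic MDP value vector yields a supersolution of the distributionally robust Bellman operator, validating the HSVI upper-bound initialization. -/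
open MeasureTheory

/- ### Auxiliary lemmas -/

lemma pi_dirac_eq {ι : Type*} [Fintype ι] {α : ι → Type*} [∀ i, MeasurableSpace (α i)]
    (g : ∀ i, α i) :
    Measure.pi (fun i => Measure.dirac (g i)) = Measure.dirac g := by
  refine Measure.pi_eq fun s hs => ?_
  rw [Measure.dirac_apply' _ (MeasurableSet.univ_pi hs)]
  by_cases h : ∀ i, g i ∈ s i
  · rw [Set.indicator_of_mem (Set.mem_univ_pi.mpr h)]
    rw [Finset.prod_congr rfl fun i _ => Measure.dirac_apply_of_mem (h i)]
    simp
  · push_neg at h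
    obtain ⟨i, hi⟩ := h
    rw [Set.indicator_of_notMem (by simp [Set.mem_univ_pi]; exact ⟨i, hi⟩)]
    refine (Finset.prod_eq_zero (Finset.mem_univ i) ?_).symm
    rw [Measure.dirac_apply' _ (hs i), Set.indicator_of_notMem hi]

lemma bTerm_linear {S Z : Type*} [Fintype S] [Fintype Z] (v : S → ℝ) (b : S → ℝ)
    (hb0 : ∀ s, 0 ≤ b s) (p : S → (S × Z) → ℝ) (hp : ∀ s i, 0 ≤ p s i) (z : Z) :
    bTerm (fun b' => ∑ s, b' s * v s) b p z = ∑ s', (∑ s, p s (s', z) * b s) * v s' := by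
  unfold bTerm bUpd
  by_cases h0 : obsW b p z = 0
  · rw [if_pos h0]
    have h0' : (∑ s, ∑ s', p s (s', z) * b s) = 0 := h0
    have H1 := (Finset.sum_eq_zero_iff_of_nonneg fun s _ =>
      Finset.sum_nonneg fun s' _ => mul_nonneg (hp s _) (hb0 s)).mp h0'
    have H : ∀ s s' : S, p s (s', z) * b s = 0 := fun s s' =>
      (Finset.sum_eq_zero_iff_of_nonneg fun s' _ => mul_nonneg (hp s _) (hb0 s)).mp
        (H1 s (Finset.mem_univ s)) s' (Finset.mem_univ s')
    simp [H]
  · rw [if_neg h0, Finset.mul_sum]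
    refine Finset.sum_congr rfl fun s' _ => ?_
    field_simp

lemma sum_bTerm_linear {S Z : Type*} [Fintype S] [Fintype Z] (v : S → ℝ) (b : S → ℝ)
    (hb0 : ∀ s, 0 ≤ b s) (p : S → (S × Z) → ℝ) (hp : ∀ s i, 0 ≤ p s i) :
    ∑ z, bTerm (fun b' => ∑ s, b' s * v s) b p z
      = ∑ s, b s * (∑ i : S × Z, p s i * v i.1) := by
  simp only [bTerm_linear v b hb0 p hp]
  simp only [Fintype.sum_prod_type, Finset.sum_mul, Finset.mul_sum]
  rw [Finset.sum_comm]
  conv_rhs => rw [Finset.sum_comm]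
  refine Finset.sum_congr rfl fun s' _ => ?_
  rw [Finset.sum_comm]
  refine Finset.sum_congr rfl fun s _ => ?_
  refine Finset.sum_congr rfl fun z _ => ?_
  ring

lemma abs_dot_le {S : Type*} [Fintype S] (v b' : S → ℝ) (hb' : b' ∈ stdSimplex ℝ S) :
    |∑ s, b' s * v s| ≤ ∑ s, |v s| := by
  calc |∑ s, b' s * v s| ≤ ∑ s, |b' s * v s| := Finset.abs_sum_le_sum_abs _ _
    _ ≤ ∑ s, |v s| := by
        refine Finset.sum_le_sum fun s _ => ?_
        rw [abs_mul, abs_of_nonneg (hb'.1 s)]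
        refine mul_le_of_le_one_left (abs_nonneg _) ?_
        calc b' s ≤ ∑ t, b' t := Finset.single_le_sum (fun t _ => hb'.1 t) (Finset.mem_univ s)
          _ = 1 := hb'.2

lemma bTerm_abs_le {S Z : Type*} [Fintype S] [Fintype Z] (v b : S → ℝ)
    (hb : b ∈ stdSimplex ℝ S) (p : S → (S × Z) → ℝ)
    (hp : ∀ s, p s ∈ stdSimplex ℝ (S × Z)) (z : Z) :
    |bTerm (fun b' => ∑ s, b' s * v s) b p z| ≤ ∑ s, |v s| := by
  unfold bTerm
  by_cases h0 : obsW b p z = 0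
  · rw [if_pos h0]
    simpa using Finset.sum_nonneg fun s _ => abs_nonneg (v s)
  · rw [if_neg h0]
    have hobs0 : 0 ≤ obsW b p z :=
      Finset.sum_nonneg fun s _ => Finset.sum_nonneg fun s' _ =>
        mul_nonneg ((hp s).1 _) (hb.1 s)
    have hobs1 : obsW b p z ≤ 1 := by
      have he : obsW b p z = ∑ s, (∑ s', p s (s', z)) * b s := by
        unfold obsW
        exact Finset.sum_congr rfl fun s _ => (Finset.sum_mul _ _ _).symm
      rw [he]
      have hin : ∀ s : S, (∑ s', p s (s', z)) ≤ 1 := by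
        intro s
        have h2 : (∑ s', p s (s', z)) ≤ ∑ s', ∑ z', p s (s', z') :=
          Finset.sum_le_sum fun s' _ =>
            Finset.single_le_sum (fun z' _ => (hp s).1 (s', z')) (Finset.mem_univ z)
        have h3 : (∑ s', ∑ z', p s (s', z')) = 1 := by
          rw [← Fintype.sum_prod_type]; exact (hp s).2
        linarith
      calc (∑ s, (∑ s', p s (s', z)) * b s) ≤ ∑ s, 1 * b s :=
            Finset.sum_le_sum fun s _ => mul_le_mul_of_nonneg_right (hin s) (hb.1 s)
        _ = 1 := by simp [hb.2]
    have hup : bUpd b p z ∈ stdSimplex ℝ S := by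
      constructor
      · intro s'
        exact div_nonneg
          (Finset.sum_nonneg fun s _ => mul_nonneg ((hp s).1 _) (hb.1 s)) hobs0
      · show (∑ s', (∑ s, p s (s', z) * b s) / obsW b p z) = 1
        rw [← Finset.sum_div, div_eq_one_iff_eq h0]
        exact Finset.sum_comm
    calc |obsW b p z * ∑ s, bUpd b p z s * v s|
        = obsW b p z * |∑ s, bUpd b p z s * v s| := by
          rw [abs_mul, abs_of_nonneg hobs0]
      _ ≤ 1 * (∑ s, |v s|) :=
          mul_le_mul hobs1 (abs_dot_le v _ hup) (abs_nonneg _) zero_le_one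
      _ = ∑ s, |v s| := one_mul _

lemma measurableSet_Xas {S Z : Type*} [Fintype S] [Fintype Z] (pbar : (S × Z) → ℝ) :
    MeasurableSet (XasSet pbar) := by
  have he : XasSet pbar =
      (⋂ i, {x : ((S × Z) → ℝ) × ((S × Z) → ℝ) | x.1 i - pbar i ≤ x.2 i}) ∩
      ((⋂ i, {x : ((S × Z) → ℝ) × ((S × Z) → ℝ) | pbar i - x.1 i ≤ x.2 i}) ∩
        (Prod.fst ⁻¹' stdSimplex ℝ (S × Z))) := by
    ext x
    simp only [XasSet, Set.mem_setOf_eq, Set.mem_inter_iff, Set.mem_iInter,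
      Set.mem_preimage]
  rw [he]
  refine MeasurableSet.inter ?_ (MeasurableSet.inter ?_ ?_)
  · exact MeasurableSet.iInter fun i =>
      measurableSet_le (by fun_prop) (by fun_prop)
  · exact MeasurableSet.iInter fun i =>
      measurableSet_le (by fun_prop) (by fun_prop)
  · exact (isClosed_stdSimplex (𝕜 := ℝ) (ι := S × Z)).measurableSet.preimage measurable_fst

/-- if `v ∈ ℝ^S` satisfies the optimistic fully-observable MDP inequalities
`v_s ≥ r_{as} + β · max { Σ_{(s',z)} p(s',z) v_{s'} : p ∈ B_{as} }` for all `a, s`, then the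
linear function `h(b) = Σ_s b_s v_s` is a supersolution of the distributionally robust
Bellman operator: `(Lh)(b) ≤ h(b)` on `Δ(S)`.  This validates the HSVI upper-bound
initialization. -/
theorem hsvi_upper_bound_init {S Z A : Type*} [Fintype S] [Nonempty S]
    [Fintype Z] [Nonempty Z] [Fintype A] [Nonempty A]
    (pbar c : A → S → (S × Z) → ℝ)
    (hpbar : ∀ a s, pbar a s ∈ stdSimplex ℝ (S × Z))
    (hc : ∀ a s i, 0 ≤ c a s i)
    (r : A → S → ℝ) (β : ℝ) (hβ0 : 0 < β) (hβ1 : β < 1)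
    (v : S → ℝ)
    (hv : ∀ a s, r a s + β * sSup ((fun p => ∑ i : S × Z, p i * v i.1) ''
        BasSet (pbar a s) (c a s)) ≤ v s) :
    ∀ b ∈ stdSimplex ℝ S,
      Lop pbar c r β (fun b' => ∑ s, b' s * v s) b ≤ ∑ s, b s * v s := by
  intro b hb
  haveI : MeasurableSingletonClass (S → ((S × Z) → ℝ) × ((S × Z) → ℝ)) :=
    Pi.instMeasurableSingletonClass
  refine ciSup_le fun a => ?_
  set pt : S → ((S × Z) → ℝ) × ((S × Z) → ℝ) := fun s => (pbar a s, c a s) with hptdef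
  -- the Dirac point belongs to the support set
  have hmemX : ∀ s, pt s ∈ XasSet (pbar a s) := fun s =>
    ⟨fun i => by show pbar a s i - pbar a s i ≤ c a s i; simpa using hc a s i,
      fun i => by show pbar a s i - pbar a s i ≤ c a s i; simpa using hc a s i, hpbar a s⟩
  -- the Dirac measures belong to the marginal ambiguity sets
  have hdmem : ∀ s : S, Measure.dirac (pt s) ∈ DasSet (pbar a s) (c a s) := by
    intro s
    refine ⟨inferInstance, Measure.dirac_apply_of_mem (hmemX s), ?_, ?_⟩
    · refine ⟨measurable_snd.aestronglyMeasurable, ?_⟩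
      simp [HasFiniteIntegral, lintegral_dirac]
    · rw [integral_dirac]
  have hμmem : Measure.pi (fun s => Measure.dirac (pt s)) ∈ DaSet (pbar a) (c a) :=
    ⟨_, hdmem, rfl⟩
  -- value at the Dirac product measure
  have hval : UVal r β (fun b' => ∑ s, b' s * v s) b a
      (Measure.pi fun s => Measure.dirac (pt s))
      = (∑ s, b s * r a s)
        + β * ∑ z, bTerm (fun b' => ∑ s, b' s * v s) b (fun s => pbar a s) z := by
    rw [UVal, pi_dirac_eq, integral_dirac]
  -- the value at the Dirac measure is at most `h(b)`
  have hle2 : (∑ s, b s * r a s)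
      + β * ∑ z, bTerm (fun b' => ∑ s, b' s * v s) b (fun s => pbar a s) z
      ≤ ∑ s, b s * v s := by
    rw [sum_bTerm_linear v b hb.1 _ (fun s i => (hpbar a s).1 i)]
    have hre : (∑ s, b s * r a s) + β * ∑ s, b s * (∑ i : S × Z, pbar a s i * v i.1)
        = ∑ s, b s * (r a s + β * ∑ i : S × Z, pbar a s i * v i.1) := by
      rw [Finset.mul_sum, ← Finset.sum_add_distrib]
      exact Finset.sum_congr rfl fun s _ => by ring
    rw [hre]
    refine Finset.sum_le_sum fun s _ => mul_le_mul_of_nonneg_left ?_ (hb.1 s)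
    refine le_trans ?_ (hv a s)
    refine add_le_add le_rfl (mul_le_mul_of_nonneg_left ?_ hβ0.le)
    refine le_csSup ?_ ⟨pbar a s, ⟨hpbar a s, fun i => by simpa using hc a s i⟩, rfl⟩
    refine ⟨∑ i : S × Z, |v i.1|, ?_⟩
    rintro y ⟨p, hpmem, rfl⟩
    refine Finset.sum_le_sum fun i _ => ?_
    calc p i * v i.1 ≤ p i * |v i.1| := by
          exact mul_le_mul_of_nonneg_left (le_abs_self _) (hpmem.1.1 i)
      _ ≤ 1 * |v i.1| := by
          refine mul_le_mul_of_nonneg_right ?_ (abs_nonneg _)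
          calc p i ≤ ∑ j, p j :=
              Finset.single_le_sum (fun j _ => hpmem.1.1 j) (Finset.mem_univ i)
            _ = 1 := hpmem.1.2
      _ = |v i.1| := one_mul _
  -- the image set is bounded below
  have hbddB : BddBelow ((fun μ => UVal r β (fun b' => ∑ s, b' s * v s) b a μ) ''
      DaSet (pbar a) (c a)) := by
    refine ⟨-(|∑ s, b s * r a s| + β * ((Fintype.card Z : ℝ) * ∑ s, |v s|)), ?_⟩
    rintro y ⟨μ, ⟨ν, hν, rfl⟩, rfl⟩
    haveI : ∀ s, IsProbabilityMeasure (ν s) := fun s => (hν s).1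
    haveI : IsProbabilityMeasure (Measure.pi ν) := by infer_instance
    have hXmeas : ∀ s : S, MeasurableSet (XasSet (pbar a s)) :=
      fun s => measurableSet_Xas _
    have h1 : Measure.pi ν (Set.pi Set.univ fun s => XasSet (pbar a s)) = 1 := by
      rw [Measure.pi_pi]
      have : ∀ s : S, ν s (XasSet (pbar a s)) = 1 := fun s => (hν s).2.1
      simp [this]
    have hae : ∀ᵐ x ∂(Measure.pi ν), ∀ s, x s ∈ XasSet (pbar a s) := by
      have hcomp : Measure.pi ν (Set.pi Set.univ fun s => XasSet (pbar a s))ᶜ = 0 := by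
        rw [measure_compl (MeasurableSet.univ_pi hXmeas) (measure_ne_top _ _), h1]
        simp
      rw [ae_iff]
      refine measure_mono_null ?_ hcomp
      intro x hx
      simp only [Set.mem_setOf_eq, not_forall] at hx
      simp only [Set.mem_compl_iff, Set.mem_univ_pi, not_forall]
      exact hx
    have hb' : ∀ᵐ x ∂(Measure.pi ν),
        ‖(∑ s, b s * r a s)
          + β * ∑ z, bTerm (fun b' => ∑ s, b' s * v s) b (fun s => (x s).1) z‖
          ≤ |∑ s, b s * r a s| + β * ((Fintype.card Z : ℝ) * ∑ s, |v s|) := by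
      filter_upwards [hae] with x hx
      have hterm : ∀ z : Z, |bTerm (fun b' => ∑ s, b' s * v s) b (fun s => (x s).1) z|
          ≤ ∑ s, |v s| :=
        fun z => bTerm_abs_le v b hb (fun s => (x s).1) (fun s => (hx s).2.2) z
      have hsum : |∑ z, bTerm (fun b' => ∑ s, b' s * v s) b (fun s => (x s).1) z|
          ≤ (Fintype.card Z : ℝ) * ∑ s, |v s| := by
        calc |∑ z, bTerm (fun b' => ∑ s, b' s * v s) b (fun s => (x s).1) z|
            ≤ ∑ z, |bTerm (fun b' => ∑ s, b' s * v s) b (fun s => (x s).1) z| :=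
              Finset.abs_sum_le_sum_abs _ _
          _ ≤ ∑ _z : Z, (∑ s, |v s|) := Finset.sum_le_sum fun z _ => hterm z
          _ = (Fintype.card Z : ℝ) * ∑ s, |v s| := by
              rw [Finset.sum_const, Finset.card_univ, nsmul_eq_mul]
      have : ‖(∑ s, b s * r a s)
          + β * ∑ z, bTerm (fun b' => ∑ s, b' s * v s) b (fun s => (x s).1) z‖
          ≤ |∑ s, b s * r a s|
            + |β * ∑ z, bTerm (fun b' => ∑ s, b' s * v s) b (fun s => (x s).1) z| :=
        abs_add_le _ _
      refine this.trans ?_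
      rw [abs_mul, abs_of_pos hβ0]
      exact add_le_add le_rfl (mul_le_mul_of_nonneg_left hsum hβ0.le)
    have hnorm := norm_integral_le_of_norm_le_const hb'
    rw [measureReal_def, measure_univ, ENNReal.toReal_one, mul_one] at hnorm
    have habs : |UVal r β (fun b' => ∑ s, b' s * v s) b a (Measure.pi ν)|
        ≤ |∑ s, b s * r a s| + β * ((Fintype.card Z : ℝ) * ∑ s, |v s|) := hnorm
    linarith [abs_le.mp habs |>.1]
  -- conclude
  exact csInf_le_of_le hbddB ⟨Measure.pi (fun s => Measure.dirac (pt s)), hμmem, rfl⟩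
    (hval.trans_le hle2)
end
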